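/- Let b(t) = ∑_{v=0}^V b_v P_v(t/T) be a Bezier trajectory on [0,T] and suppose a constraint function h : ℝ → ℝ is Lipschitz with constant L_h along b, i.e., |h(b(t)) - h(b(s))| ≤ L_h·L_b·|t-s| where L_b is a Lipschitz constant of b on [0,T]. If h(b(t_i)) ≤ -ε at each of N points t_1 < … < t_N with consecutive gaps at most δ (and t_1 ≤ δ/2, T - t_N ≤ δ/2), and L_h·L_b·δ/2 ≤ ε, then h(b(t)) ≤ 0 for all t ∈ [0,T]. -/
import Mathlib


/-- The `v`-th Bernstein basis polynomial of degree `V` on `[0,1]`. -/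
noncomputable def bern (V v : ℕ) (t : ℝ) : ℝ := (V.choose v : ℝ) * t ^ v * (1 - t) ^ (V - v)

/-- Soundness of constraint sampling: if `h ∘ b` is Lipschitz along the Bezier
trajectory `b` with constant `L_h·L_b`, the constraint holds with margin `ε` at `N`
time nodes with gaps at most `δ` (and half-gaps at the endpoints), and
`L_h·L_b·δ/2 ≤ ε`, then `h(b(t)) ≤ 0` on all of `[0, T]`. -/
theorem constraint_sampling_sound (V : ℕ) (bc : Fin (V + 1) → ℝ)
    (T Lh Lb ε δ : ℝ) (hT : 0 < T) (hε : 0 < ε) (hδ : 0 < δ)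
    (b : ℝ → ℝ) (hb : ∀ t : ℝ, b t = ∑ v : Fin (V + 1), bc v * bern V v (t / T))
    (h : ℝ → ℝ)
    (hlip : ∀ s ∈ Set.Icc (0 : ℝ) T, ∀ t ∈ Set.Icc (0 : ℝ) T,
      |h (b t) - h (b s)| ≤ Lh * Lb * |t - s|)
    (N : ℕ) (hN : 1 ≤ N) (tn : Fin N → ℝ)
    (hmono : StrictMono tn)
    (hin : ∀ i : Fin N, tn i ∈ Set.Icc (0 : ℝ) T)
    (hgap : ∀ i j : Fin N, (j : ℕ) = (i : ℕ) + 1 → tn j - tn i ≤ δ)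
    (hfirst : tn ⟨0, by omega⟩ ≤ δ / 2)
    (hlast : T - tn ⟨N - 1, by omega⟩ ≤ δ / 2)
    (hmargin : ∀ i : Fin N, h (b (tn i)) ≤ -ε)
    (hδε : Lh * Lb * δ / 2 ≤ ε) :
    ∀ t ∈ Set.Icc (0 : ℝ) T, h (b t) ≤ 0 := by

  intro t ht
  obtain ⟨ht0, htT⟩ := ht
  have key : ∃ i : Fin N, |t - tn i| ≤ δ / 2 := by
    by_cases hA : t ≤ tn ⟨0, by omega⟩
    · refine ⟨⟨0, by omega⟩, ?_⟩
      rw [abs_le]; constructor <;> linarith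
    by_cases hB : tn ⟨N - 1, by omega⟩ ≤ t
    · refine ⟨⟨N - 1, by omega⟩, ?_⟩
      rw [abs_le]; constructor <;> linarith
    push_neg at hA hB
    classical
    set S : Finset (Fin N) := Finset.univ.filter (fun i => tn i ≤ t) with hS
    have hne : S.Nonempty := ⟨⟨0, by omega⟩, by simp [hS]; linarith⟩
    set i := S.max' hne with hi
    have hiS : i ∈ S := S.max'_mem hne
    have hile : tn i ≤ t := by simpa [hS] using hiS
    have hilt : (i : ℕ) + 1 < N := by
      by_contra hc
      have hv : (i : ℕ) = N - 1 := by omega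
      have : i = ⟨N - 1, by omega⟩ := Fin.ext hv
      rw [this] at hile; linarith
    set j : Fin N := ⟨(i : ℕ) + 1, hilt⟩ with hj
    have hjn : ¬ tn j ≤ t := by
      intro hc
      have hjS : j ∈ S := by simp [hS, hc]
      have h2 : (j : ℕ) ≤ (i : ℕ) := S.le_max' j hjS
      simp [hj] at h2
    push_neg at hjn
    have hgp : tn j - tn i ≤ δ := hgap i j rfl
    by_cases hmid : t ≤ tn i + δ / 2
    · exact ⟨i, by rw [abs_le]; constructor <;> linarith⟩
    · push_neg at hmid
      exact ⟨j, by rw [abs_le]; constructor <;> linarith⟩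
  obtain ⟨i, hi⟩ := key
  have habs := hlip (tn i) (hin i) t ⟨ht0, htT⟩
  have hm := hmargin i
  have hd0 : (0 : ℝ) ≤ |t - tn i| := abs_nonneg _
  have h1 : h (b t) - h (b (tn i)) ≤ Lh * Lb * |t - tn i| :=
    le_trans (le_abs_self _) habs
  rcases le_or_gt 0 (Lh * Lb) with hp | hp
  · have h2 : Lh * Lb * |t - tn i| ≤ Lh * Lb * (δ / 2) :=
      mul_le_mul_of_nonneg_left hi hp
    linarith
  · have h2 : Lh * Lb * |t - tn i| ≤ 0 :=
      mul_nonpos_of_nonpos_of_nonneg (le_of_lt hp) hd0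
    linarith
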